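/- Let A be a real n×n matrix with xᵀAx > 0 for all nonzero real x, C a real m×m symmetric positive semidefinite matrix, B a real m×n matrix of full row rank, and α, β > 0, and let M = (1/2)·[[αI + A, Bᵀ], [−B, βI + C]] and N = (1/2)·[[αI − A, −Bᵀ], [B, βI − C]]. Then for every right-hand side b ∈ ℝ^{n+m} and every initial guess u⁽⁰⁾ ∈ ℝ^{n+m}, the stationary iteration u⁽ᵏ⁺¹⁾ = M⁻¹(N u⁽ᵏ⁾ + b) converges (as k → ∞) to the unique solution u* of the generalized saddle point system 𝒜u = b, where 𝒜 = [[A, Bᵀ], [−B, C]] = M − N. -/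

import Mathlib

open Matrix

open Filter

set_option maxHeartbeats 1000000




lemma contMulVec {ι : Type*} [Fintype ι] (M : Matrix ι ι ℝ) :
    Continuous fun v : ι → ℝ => M *ᵥ v := by
  apply continuous_pi
  intro i
  simp only [Matrix.mulVec, dotProduct]
  exact continuous_finset_sum _ fun j _ => (continuous_const.mul (continuous_apply j))

lemma powersTendstoZero {ι : Type*} [Fintype ι] [DecidableEq ι]
    (G : Matrix ι ι ℝ) (p : (ι → ℝ) → ℝ) (hpc : Continuous p)
    (hp0 : p 0 = 0) (hppos : ∀ v, v ≠ 0 → 0 < p v)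
    (Mc : ℝ) (hMc : 0 ≤ Mc) (hcoord : ∀ (v : ι → ℝ) (i : ι), (v i)^2 ≤ Mc * p v)
    (hstep : ∀ w, p (G *ᵥ w) ≤ p w)
    (hstep2 : ∀ w, w ≠ 0 → p (G *ᵥ (G *ᵥ w)) < p w) :
    ∀ w0 : ι → ℝ, Tendsto (fun k : ℕ => (G ^ k) *ᵥ w0) atTop (nhds 0) := by
  intro w0
  set e : ℕ → ι → ℝ := fun k : ℕ => (G ^ k) *ᵥ w0 with he
  have hesucc : ∀ k, e (k + 1) = G *ᵥ e k := by
    intro k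
    show (G ^ (k+1)) *ᵥ w0 = G *ᵥ ((G ^ k) *ᵥ w0)
    rw [Matrix.mulVec_mulVec, ← pow_succ']
  have hpnonneg : ∀ v, 0 ≤ p v := by
    intro v
    rcases eq_or_ne v 0 with rfl | h
    · exact le_of_eq hp0.symm
    · exact (hppos v h).le
  set a : ℕ → ℝ := fun k => p (e k) with ha
  have hanti : Antitone a := by
    apply antitone_nat_of_succ_le
    intro k
    show p (e (k+1)) ≤ p (e k)
    rw [hesucc k]
    exact hstep (e k)
  have hbdd : BddBelow (Set.range a) := ⟨0, by rintro x ⟨k, rfl⟩; exact hpnonneg _⟩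
  have halim : Tendsto a atTop (nhds (⨅ k, a k)) := tendsto_atTop_ciInf hanti hbdd
  set ℓ := ⨅ k, a k with hℓ
  -- boundedness of the sequence e
  have hbound : ∀ k, e k ∈ Metric.closedBall (0 : ι → ℝ) (Real.sqrt (Mc * a 0)) := by
    intro k
    rw [Metric.mem_closedBall]
    rw [dist_pi_le_iff (Real.sqrt_nonneg _)]
    intro i
    simp only [Real.dist_eq, Pi.zero_apply, sub_zero]
    have h1 : (e k i)^2 ≤ Mc * a k := hcoord (e k) i
    have h2 : Mc * a k ≤ Mc * a 0 := mul_le_mul_of_nonneg_left (hanti (Nat.zero_le k)) hMc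
    calc |e k i| = Real.sqrt ((e k i)^2) := (Real.sqrt_sq_eq_abs _).symm
      _ ≤ Real.sqrt (Mc * a 0) := Real.sqrt_le_sqrt (h1.trans h2)
  obtain ⟨L, _, φ, hφmono, hφlim⟩ :=
    tendsto_subseq_of_bounded Metric.isBounded_closedBall hbound
  have hφat : Tendsto φ atTop atTop := hφmono.tendsto_atTop
  have hpL : p L = ℓ := by
    have h1 : Tendsto (fun j => a (φ j)) atTop (nhds (p L)) :=
      (hpc.continuousAt.tendsto.comp hφlim)
    have h2 : Tendsto (fun j => a (φ j)) atTop (nhds ℓ) := halim.comp hφat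
    exact tendsto_nhds_unique h1 h2
  have hL0 : L = 0 := by
    by_contra hLne
    have hstrict := hstep2 L hLne
    have h1 : Tendsto (fun j => p (G *ᵥ (G *ᵥ e (φ j)))) atTop
        (nhds (p (G *ᵥ (G *ᵥ L)))) :=
      ((hpc.comp ((contMulVec G).comp (contMulVec G))).continuousAt.tendsto.comp hφlim)
    have heq : ∀ j, p (G *ᵥ (G *ᵥ e (φ j))) = a (φ j + 2) := by
      intro j
      show _ = p (e (φ j + 2))
      rw [hesucc (φ j + 1), hesucc (φ j)]
    have h2 : Tendsto (fun j => a (φ j + 2)) atTop (nhds ℓ) := by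
      have hcomp : Tendsto (fun j => φ j + 2) atTop atTop :=
        (tendsto_add_atTop_nat 2).comp hφat
      exact halim.comp hcomp
    rw [funext heq] at h1
    have h3 : p (G *ᵥ (G *ᵥ L)) = ℓ := tendsto_nhds_unique h1 h2
    rw [h3, hpL] at hstrict
    exact lt_irrefl _ hstrict
  have hℓ0 : ℓ = 0 := by rw [← hpL, hL0, hp0]
  rw [hℓ0] at halim
  -- now conclude e → 0 coordinatewise
  rw [tendsto_pi_nhds]
  intro i
  have habs : Tendsto (fun k => |e k i|) atTop (nhds 0) := by
    have hsq : Tendsto (fun k => Mc * a k) atTop (nhds 0) := by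
      simpa using halim.const_mul Mc
    have h1 : Tendsto (fun k => Real.sqrt (Mc * a k)) atTop (nhds 0) := by
      have := (Real.continuous_sqrt.continuousAt (x := (0:ℝ))).tendsto.comp hsq
      simpa [Function.comp_def] using this
    apply squeeze_zero (fun k => abs_nonneg _) _ h1
    intro k
    calc |e k i| = Real.sqrt ((e k i)^2) := (Real.sqrt_sq_eq_abs _).symm
      _ ≤ Real.sqrt (Mc * a k) := Real.sqrt_le_sqrt (hcoord (e k) i)
  have := (tendsto_zero_iff_abs_tendsto_zero (fun k => e k i)).mpr habs
  simpa using this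


section blocks
variable {n m : ℕ} (A : Matrix (Fin n) (Fin n) ℝ) (B : Matrix (Fin m) (Fin n) ℝ)
  (C : Matrix (Fin m) (Fin m) ℝ)

lemma quadSplit (z : Fin n ⊕ Fin m → ℝ) :
    z ⬝ᵥ (Matrix.fromBlocks A Bᵀ (-B) C) *ᵥ z =
      (z ∘ Sum.inl) ⬝ᵥ A *ᵥ (z ∘ Sum.inl) + (z ∘ Sum.inr) ⬝ᵥ C *ᵥ (z ∘ Sum.inr) := by
  set x := z ∘ Sum.inl with hx
  set y := z ∘ Sum.inr with hy
  have hz : z = Sum.elim x y := by funext i; cases i <;> rfl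
  rw [hz]
  rw [Matrix.fromBlocks_mulVec, sumElim_dotProduct_sumElim]
  have hcross : x ⬝ᵥ (Bᵀ *ᵥ y) = y ⬝ᵥ (B *ᵥ x) := by
    rw [Matrix.dotProduct_mulVec y B x, Matrix.mulVec_transpose, dotProduct_comm]
  simp only [Sum.elim_comp_inl, Sum.elim_comp_inr]
  rw [dotProduct_add, dotProduct_add, Matrix.neg_mulVec,
    dotProduct_neg, hcross]
  ring

lemma mulVecInl (z : Fin n ⊕ Fin m → ℝ) (i : Fin n) :
    ((Matrix.fromBlocks A Bᵀ (-B) C) *ᵥ z) (Sum.inl i) =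
      (A *ᵥ (z ∘ Sum.inl)) i + (Bᵀ *ᵥ (z ∘ Sum.inr)) i := by
  have hz : z = Sum.elim (z ∘ Sum.inl) (z ∘ Sum.inr) := by funext j; cases j <;> rfl
  conv_lhs => rw [hz, Matrix.fromBlocks_mulVec]
  simp

lemma mulVecInr (z : Fin n ⊕ Fin m → ℝ) (i : Fin m) :
    ((Matrix.fromBlocks A Bᵀ (-B) C) *ᵥ z) (Sum.inr i) =
      -((B *ᵥ (z ∘ Sum.inl)) i) + (C *ᵥ (z ∘ Sum.inr)) i := by
  have hz : z = Sum.elim (z ∘ Sum.inl) (z ∘ Sum.inr) := by funext j; cases j <;> rfl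
  conv_lhs => rw [hz, Matrix.fromBlocks_mulVec]
  simp [Matrix.neg_mulVec]

end blocks


/-- The shift-splitting matrix `M = (1/2)⬝[[αI + A, Bᵀ], [−B, βI + C]]`. -/
noncomputable def MSS {n m : ℕ} (A : Matrix (Fin n) (Fin n) ℝ) (B : Matrix (Fin m) (Fin n) ℝ)
    (C : Matrix (Fin m) (Fin m) ℝ) (α β : ℝ) :
    Matrix (Fin n ⊕ Fin m) (Fin n ⊕ Fin m) ℝ :=
  (1 / 2 : ℝ) • Matrix.fromBlocks (α • (1 : Matrix (Fin n) (Fin n) ℝ) + A) Bᵀ (-B)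
    (β • (1 : Matrix (Fin m) (Fin m) ℝ) + C)

/-- The shift-splitting matrix `N = (1/2)⬝[[αI − A, −Bᵀ], [B, βI − C]]`. -/
noncomputable def NSS {n m : ℕ} (A : Matrix (Fin n) (Fin n) ℝ) (B : Matrix (Fin m) (Fin n) ℝ)
    (C : Matrix (Fin m) (Fin m) ℝ) (α β : ℝ) :
    Matrix (Fin n ⊕ Fin m) (Fin n ⊕ Fin m) ℝ :=
  (1 / 2 : ℝ) • Matrix.fromBlocks (α • (1 : Matrix (Fin n) (Fin n) ℝ) - A) (-Bᵀ) B
    (β • (1 : Matrix (Fin m) (Fin m) ℝ) - C)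

/-- In the shift-splitting setting, for every right-hand side `b` and
every initial guess `u⁰`, the stationary iteration `u⁽ᵏ⁺¹⁾ = M⁻¹(N u⁽ᵏ⁾ + b)` converges to
the unique solution `u*` of the generalized saddle point system `𝒜 u = b`, where
`𝒜 = [[A, Bᵀ], [−B, C]] = M − N`. -/
theorem MGSS_iteration_converges
    (n m : ℕ) (A : Matrix (Fin n) (Fin n) ℝ)
    (hA : ∀ x : Fin n → ℝ, x ≠ 0 → 0 < x ⬝ᵥ A.mulVec x)
    (C : Matrix (Fin m) (Fin m) ℝ) (hC : C.PosSemidef)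
    (B : Matrix (Fin m) (Fin n) ℝ) (hB : B.rank = m)
    (α β : ℝ) (hα : 0 < α) (hβ : 0 < β) :
    ∀ b u0 : Fin n ⊕ Fin m → ℝ, ∃ ustar : Fin n ⊕ Fin m → ℝ,
      (Matrix.fromBlocks A Bᵀ (-B) C).mulVec ustar = b ∧
      (∀ v : Fin n ⊕ Fin m → ℝ,
        (Matrix.fromBlocks A Bᵀ (-B) C).mulVec v = b → v = ustar) ∧
      Filter.Tendsto
        (fun k : ℕ =>
          (fun v : Fin n ⊕ Fin m → ℝ =>
            (MSS A B C α β)⁻¹.mulVec ((NSS A B C α β).mulVec v + b))^[k] u0)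
        Filter.atTop (nhds ustar) := by
  intro b u0
  set 𝒜 := Matrix.fromBlocks A Bᵀ (-B) C with h𝒜def
  set d : Fin n ⊕ Fin m → ℝ := Sum.elim (fun _ => α) (fun _ => β) with hddef
  set D := Matrix.diagonal d with hDdef
  have hdpos : ∀ i, 0 < d i := by rintro (i | i); exacts [hα, hβ]
  -- nonnegativity of the quadratic forms
  have hAnn : ∀ x : Fin n → ℝ, 0 ≤ x ⬝ᵥ A *ᵥ x := by
    intro x
    rcases eq_or_ne x 0 with rfl | h
    · simp
    · exact (hA x h).le
  have hCnn : ∀ y : Fin m → ℝ, 0 ≤ y ⬝ᵥ C *ᵥ y := by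
    intro y; simpa using hC.dotProduct_mulVec_nonneg y
  have hq := quadSplit A B C
  have hqnn : ∀ z, 0 ≤ z ⬝ᵥ 𝒜 *ᵥ z := by
    intro z; rw [hq z]; exact add_nonneg (hAnn _) (hCnn _)
  have hqpos : ∀ z : Fin n ⊕ Fin m → ℝ, z ∘ Sum.inl ≠ (0 : Fin n → ℝ) → 0 < z ⬝ᵥ 𝒜 *ᵥ z := by
    intro z hz; rw [hq z]
    exact add_pos_of_pos_of_nonneg (hA _ hz) (hCnn _)
  -- `Bᵀ` is injective
  have hBt : ∀ y : Fin m → ℝ, Bᵀ *ᵥ y = 0 → y = 0 := by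
    have hr : Bᵀ.rank = m := by rw [Matrix.rank_transpose]; exact hB
    have hker : LinearMap.ker Bᵀ.mulVecLin = ⊥ := by
      have h1 := LinearMap.finrank_range_add_finrank_ker Bᵀ.mulVecLin
      rw [Module.finrank_pi] at h1
      have h2 : Module.finrank ℝ (LinearMap.range Bᵀ.mulVecLin) = m := hr
      rw [h2, Fintype.card_fin] at h1
      have h3 : Module.finrank ℝ (LinearMap.ker Bᵀ.mulVecLin) = 0 := by omega
      exact Submodule.finrank_eq_zero.mp h3
    intro y hy
    have : y ∈ LinearMap.ker Bᵀ.mulVecLin := hy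
    rw [hker] at this
    simpa using this
  have hsum0 : ∀ z : Fin n ⊕ Fin m → ℝ, z ∘ Sum.inl = 0 → z ∘ Sum.inr = 0 → z = 0 := by
    intro z h1 h2; funext i
    cases i with
    | inl i => exact congrFun h1 i
    | inr i => exact congrFun h2 i
  -- 𝒜 is injective / invertible
  have h𝒜inj : ∀ z, 𝒜 *ᵥ z = 0 → z = 0 := by
    intro z hz
    have h0 : z ⬝ᵥ 𝒜 *ᵥ z = 0 := by rw [hz]; simp
    have hx : z ∘ Sum.inl = 0 := by
      by_contra hxne
      exact (hqpos z hxne).ne' h0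
    have hy : z ∘ Sum.inr = 0 := by
      apply hBt
      funext i
      have h1 := congrFun hz (Sum.inl i)
      rw [mulVecInl A B C z i] at h1
      rw [hx] at h1
      simpa using h1
    exact hsum0 z hx hy
  have h𝒜unit : IsUnit 𝒜 := by
    rw [← Matrix.mulVec_injective_iff_isUnit]
    intro u v huv
    have h1 : 𝒜 *ᵥ (u - v) = 0 := by rw [Matrix.mulVec_sub, huv, sub_self]
    exact sub_eq_zero.mp (h𝒜inj _ h1)
  have h𝒜det : IsUnit 𝒜.det := (Matrix.isUnit_iff_isUnit_det 𝒜).mp h𝒜unit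
  -- S = D + 𝒜 is invertible
  set S := D + 𝒜 with hSdef
  have hSinj : ∀ z, S *ᵥ z = 0 → z = 0 := by
    intro z hz
    by_contra hzne
    have h0 : z ⬝ᵥ S *ᵥ z = 0 := by rw [hz]; simp
    have hD1 : z ⬝ᵥ D *ᵥ z = ∑ i, d i * (z i)^2 := by
      apply Finset.sum_congr rfl
      intro i _
      rw [hDdef, Matrix.mulVec_diagonal]
      ring
    have hDpos : 0 < z ⬝ᵥ D *ᵥ z := by
      rw [hD1]
      obtain ⟨i, hi⟩ : ∃ i, z i ≠ 0 := Function.ne_iff.mp hzne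
      apply Finset.sum_pos'
      · intro j _
        have := (hdpos j).le
        positivity
      · exact ⟨i, Finset.mem_univ i, by
          have h1 := hdpos i
          have h2 : (0:ℝ) < (z i)^2 := by positivity
          positivity⟩
    have hsplit : z ⬝ᵥ S *ᵥ z = z ⬝ᵥ D *ᵥ z + z ⬝ᵥ 𝒜 *ᵥ z := by
      rw [hSdef, Matrix.add_mulVec, dotProduct_add]
    have := hqnn z
    linarith [hsplit ▸ h0]
  have hSunit : IsUnit S := by
    rw [← Matrix.mulVec_injective_iff_isUnit]
    intro u v huv
    have h1 : S *ᵥ (u - v) = 0 := by rw [Matrix.mulVec_sub, huv, sub_self]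
    exact sub_eq_zero.mp (hSinj _ h1)
  have hSdet : IsUnit S.det := (Matrix.isUnit_iff_isUnit_det S).mp hSunit
  have hSS : S * S⁻¹ = 1 := Matrix.mul_nonsing_inv S hSdet
  have hS'S : S⁻¹ * S = 1 := Matrix.nonsing_inv_mul S hSdet
  -- the unique solution
  set ustar := 𝒜⁻¹ *ᵥ b with hustardef
  have hustar : 𝒜 *ᵥ ustar = b := by
    rw [hustardef, Matrix.mulVec_mulVec, Matrix.mul_nonsing_inv _ h𝒜det, Matrix.one_mulVec]
  have huniq : ∀ v, 𝒜 *ᵥ v = b → v = ustar := by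
    intro v hv
    have h1 : 𝒜 *ᵥ (v - ustar) = 0 := by
      rw [Matrix.mulVec_sub, hv, hustar, sub_self]
    exact sub_eq_zero.mp (h𝒜inj _ h1)
  refine ⟨ustar, hustar, huniq, ?_⟩
  -- identification of MSS and NSS
  have hM : MSS A B C α β = (2⁻¹ : ℝ) • S := by
    rw [MSS, hSdef, hDdef, hddef, ← Matrix.fromBlocks_diagonal, h𝒜def, Matrix.fromBlocks_add]
    simp [Matrix.smul_one_eq_diagonal, one_div]
  have hN : NSS A B C α β = (2⁻¹ : ℝ) • (D - 𝒜) := by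
    have hsub : D - 𝒜 = Matrix.fromBlocks
        (α • (1 : Matrix (Fin n) (Fin n) ℝ) - A) (-Bᵀ) B
        (β • (1 : Matrix (Fin m) (Fin m) ℝ) - C) := by
      rw [hDdef, hddef, ← Matrix.fromBlocks_diagonal, h𝒜def, sub_eq_add_neg,
        Matrix.fromBlocks_neg, Matrix.fromBlocks_add]
      simp [Matrix.smul_one_eq_diagonal, sub_eq_add_neg]
    rw [NSS, hsub, one_div]
  haveI : Invertible (2⁻¹ : ℝ) := invertibleOfNonzero (by norm_num)
  have hMdet : IsUnit (MSS A B C α β).det := by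
    rw [hM, Matrix.det_smul]
    apply IsUnit.mul
    · exact isUnit_iff_ne_zero.mpr (pow_ne_zero _ (by norm_num))
    · exact hSdet
  have hMinvM : (MSS A B C α β)⁻¹ * (MSS A B C α β) = 1 :=
    Matrix.nonsing_inv_mul _ hMdet
  have hMN : NSS A B C α β + 𝒜 = MSS A B C α β := by
    rw [hM, hN]
    module
  have hT : (MSS A B C α β)⁻¹ * NSS A B C α β = S⁻¹ * (D - 𝒜) := by
    rw [hM, hN, Matrix.inv_smul (A := S) (2⁻¹ : ℝ) hSdet, Matrix.smul_mul, Matrix.mul_smul, smul_smul,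
      invOf_mul_self, one_smul]
  set G := (D - 𝒜) * S⁻¹ with hGdef
  set T := S⁻¹ * (D - 𝒜) with hTdef
  -- conjugation of powers
  have hTG : ∀ k : ℕ, T ^ k = S⁻¹ * (G ^ k * S) := by
    intro k
    induction k with
    | zero => rw [pow_zero, pow_zero, Matrix.one_mul, hS'S]
    | succ k ih =>
      rw [pow_succ, ih, pow_succ]
      have h1 : S * (S⁻¹ * (D - 𝒜)) = D - 𝒜 := by
        rw [← Matrix.mul_assoc, hSS, Matrix.one_mul]
      have h2 : G * S = D - 𝒜 := by
        rw [hGdef, Matrix.mul_assoc, hS'S, Matrix.mul_one]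
      calc S⁻¹ * (G ^ k * S) * (S⁻¹ * (D - 𝒜))
          = S⁻¹ * (G ^ k * (S * (S⁻¹ * (D - 𝒜)))) := by
            simp only [Matrix.mul_assoc]
        _ = S⁻¹ * (G ^ k * (D - 𝒜)) := by rw [h1]
        _ = S⁻¹ * (G ^ k * G * S) := by rw [Matrix.mul_assoc (G^k) G S, h2]
  -- the weighted norm
  set p : (Fin n ⊕ Fin m → ℝ) → ℝ := fun v => ∑ i, (d i)⁻¹ * (v i)^2 with hpdef
  have hpc : Continuous p := by
    apply continuous_finset_sum
    intro i _
    exact continuous_const.mul ((continuous_apply i).pow 2)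
  have hp0 : p 0 = 0 := by simp [hpdef]
  have hppos : ∀ v, v ≠ 0 → 0 < p v := by
    intro v hv
    obtain ⟨i, hi⟩ : ∃ i, v i ≠ 0 := Function.ne_iff.mp hv
    apply Finset.sum_pos'
    · intro j _
      have := (hdpos j).le
      positivity
    · exact ⟨i, Finset.mem_univ i, by
        have h1 := hdpos i
        positivity⟩
  have hpnn : ∀ v, 0 ≤ p v := by
    intro v
    rcases eq_or_ne v 0 with rfl | h
    · exact hp0.ge
    · exact (hppos v h).le
  -- coordinate bound
  have hcoord : ∀ (v : Fin n ⊕ Fin m → ℝ) i, (v i)^2 ≤ max α β * p v := by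
    intro v i
    have h1 : (d i)⁻¹ * (v i)^2 ≤ p v := by
      apply Finset.single_le_sum (f := fun j => (d j)⁻¹ * (v j)^2)
      · intro j _
        have := (hdpos j).le
        positivity
      · exact Finset.mem_univ i
    have h2 : (v i)^2 = d i * ((d i)⁻¹ * (v i)^2) := by
      rw [← mul_assoc, mul_inv_cancel₀ (hdpos i).ne', one_mul]
    have h3 : d i ≤ max α β := by
      rcases i with i | i
      · exact le_max_left α β
      · exact le_max_right α β
    calc (v i)^2 = d i * ((d i)⁻¹ * (v i)^2) := h2
      _ ≤ d i * p v := mul_le_mul_of_nonneg_left h1 (hdpos i).le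
      _ ≤ max α β * p v := mul_le_mul_of_nonneg_right h3 (hpnn v)
  -- the key identity
  have hSz : ∀ w, S *ᵥ (S⁻¹ *ᵥ w) = w := by
    intro w
    rw [Matrix.mulVec_mulVec, hSS, Matrix.one_mulVec]
  have hGw : ∀ w, G *ᵥ w = (D - 𝒜) *ᵥ (S⁻¹ *ᵥ w) := by
    intro w
    rw [Matrix.mulVec_mulVec]
  have hkey : ∀ w, p w = p (G *ᵥ w) + 4 * ((S⁻¹ *ᵥ w) ⬝ᵥ 𝒜 *ᵥ (S⁻¹ *ᵥ w)) := by
    intro w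
    set z := S⁻¹ *ᵥ w with hz
    have hterm : ∀ i, (d i)⁻¹ * ((S *ᵥ z) i)^2
        = (d i)⁻¹ * (((D - 𝒜) *ᵥ z) i)^2 + 4 * (z i * (𝒜 *ᵥ z) i) := by
      intro i
      have hDi : (D *ᵥ z) i = d i * z i := by rw [hDdef, Matrix.mulVec_diagonal]
      rw [hSdef, Matrix.add_mulVec, Matrix.sub_mulVec]
      simp only [Pi.add_apply, Pi.sub_apply, hDi]
      have hne := (hdpos i).ne'
      field_simp
      ring
    have hL : p w = ∑ i, (d i)⁻¹ * ((S *ᵥ z) i)^2 := by rw [hSz w]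
    rw [hL, hGw w]
    rw [Finset.sum_congr rfl (fun i _ => hterm i), Finset.sum_add_distrib]
    congr 1
    rw [← Finset.mul_sum]
    rfl
  have hstep : ∀ w, p (G *ᵥ w) ≤ p w := by
    intro w
    have h1 := hkey w
    have h2 := hqnn (S⁻¹ *ᵥ w)
    linarith
  -- the strict two-step decrease
  have hstep2 : ∀ w, w ≠ 0 → p (G *ᵥ (G *ᵥ w)) < p w := by
    intro w hw
    set z := S⁻¹ *ᵥ w with hz
    have hzne : z ≠ 0 := by
      intro h0
      apply hw
      rw [← hSz w, ← hz, h0, Matrix.mulVec_zero]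
    rcases eq_or_ne (z ∘ Sum.inl) 0 with hx | hx
    · -- x = 0 : strictness at the second step
      set w' := G *ᵥ w with hw'
      set z' := S⁻¹ *ᵥ w' with hz'
      have hx' : z' ∘ Sum.inl ≠ 0 := by
        intro hx'0
        -- derive a contradiction
        have hEq : D *ᵥ z' + 𝒜 *ᵥ z' = D *ᵥ z - 𝒜 *ᵥ z := by
          have h1 : S *ᵥ z' = (D - 𝒜) *ᵥ z := by
            rw [hz', hSz w', hw', hGw w, ← hz]
          rw [hSdef, Matrix.add_mulVec] at h1
          rw [Matrix.sub_mulVec] at h1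
          exact h1
        have hyeq : z' ∘ Sum.inr = -(z ∘ Sum.inr) := by
          have hBsum : Bᵀ *ᵥ ((z' ∘ Sum.inr) + (z ∘ Sum.inr)) = 0 := by
            rw [Matrix.mulVec_add]
            funext i
            have h1 := congrFun hEq (Sum.inl i)
            simp only [Pi.add_apply, Pi.sub_apply] at h1
            rw [h𝒜def] at h1
            rw [mulVecInl A B C z' i, mulVecInl A B C z i] at h1
            have hD1 : (D *ᵥ z') (Sum.inl i) = α * z' (Sum.inl i) := by
              rw [hDdef, Matrix.mulVec_diagonal]; rfl
            have hD2 : (D *ᵥ z) (Sum.inl i) = α * z (Sum.inl i) := by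
              rw [hDdef, Matrix.mulVec_diagonal]; rfl
            have hz'i : z' (Sum.inl i) = 0 := congrFun hx'0 i
            have hzi : z (Sum.inl i) = 0 := congrFun hx i
            rw [hD1, hD2, hz'i, hzi, hx'0, hx, Matrix.mulVec_zero] at h1
            simp only [Pi.zero_apply, Pi.add_apply, zero_add, mul_zero] at h1
            simp only [Pi.add_apply, Pi.zero_apply]
            linarith [h1]
          have := hBt _ hBsum
          funext i
          have := congrFun this i
          simp only [Pi.add_apply, Pi.zero_apply] at this
          simp only [Pi.neg_apply]
          linarith
        have hy0 : z ∘ Sum.inr = 0 := by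
          funext i
          have h1 := congrFun hEq (Sum.inr i)
          simp only [Pi.add_apply, Pi.sub_apply] at h1
          rw [h𝒜def] at h1
          rw [mulVecInr A B C z' i, mulVecInr A B C z i] at h1
          have hD1 : (D *ᵥ z') (Sum.inr i) = β * z' (Sum.inr i) := by
            rw [hDdef, Matrix.mulVec_diagonal]; rfl
          have hD2 : (D *ᵥ z) (Sum.inr i) = β * z (Sum.inr i) := by
            rw [hDdef, Matrix.mulVec_diagonal]; rfl
          rw [hD1, hD2, hx'0, hx, Matrix.mulVec_zero, hyeq] at h1
          have hz'i : z' (Sum.inr i) = -(z (Sum.inr i)) := congrFun hyeq i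
          rw [Matrix.mulVec_neg] at h1
          simp only [Pi.zero_apply, Pi.neg_apply, neg_zero, zero_add, mul_zero] at h1
          have : 2 * β * (z (Sum.inr i)) = 0 := by
            rw [hz'i] at h1
            linarith [h1]
          have hβne : (2:ℝ) * β ≠ 0 := by positivity
          simp only [Pi.zero_apply]
          rcases mul_eq_zero.mp this with h | h
          · exact absurd h hβne
          · exact h
        exact hzne (hsum0 z hx hy0)
      -- x' ≠ 0 gives strictness at the second step
      have hq' : 0 < z' ⬝ᵥ 𝒜 *ᵥ z' := hqpos z' hx'
      have h1 := hkey w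
      have h2 := hkey w'
      have h3 := hqnn z
      rw [← hz] at h1
      rw [← hz'] at h2
      rw [← hw'] at *
      linarith
    · -- x ≠ 0 : strictness at the first step
      have hq1 : 0 < z ⬝ᵥ 𝒜 *ᵥ z := hqpos z hx
      have h1 := hkey w
      have h2 := hkey (G *ᵥ w)
      have h3 := hqnn (S⁻¹ *ᵥ (G *ᵥ w))
      rw [← hz] at h1
      linarith
  -- apply the convergence lemma
  have hconv := powersTendstoZero G p hpc hp0 hppos (max α β)
    (le_max_of_le_left hα.le) hcoord hstep hstep2 (S *ᵥ (u0 - ustar))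
  -- transport through S⁻¹
  have hconv2 : Tendsto (fun k : ℕ => (T ^ k) *ᵥ (u0 - ustar)) atTop (nhds 0) := by
    have hc := (contMulVec S⁻¹).continuousAt.tendsto.comp hconv
    have heq : ∀ k : ℕ, S⁻¹ *ᵥ ((G ^ k) *ᵥ (S *ᵥ (u0 - ustar)))
        = (T ^ k) *ᵥ (u0 - ustar) := by
      intro k
      rw [hTG k, Matrix.mulVec_mulVec, Matrix.mulVec_mulVec, Matrix.mul_assoc]
    have : Tendsto (fun k : ℕ => S⁻¹ *ᵥ ((G ^ k) *ᵥ (S *ᵥ (u0 - ustar)))) atTop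
        (nhds (S⁻¹ *ᵥ 0)) := hc
    rw [Matrix.mulVec_zero] at this
    rw [funext heq] at this
    exact this
  -- the iteration identity
  set f : (Fin n ⊕ Fin m → ℝ) → (Fin n ⊕ Fin m → ℝ) :=
    fun v => (MSS A B C α β)⁻¹ *ᵥ ((NSS A B C α β) *ᵥ v + b) with hfdef
  have hlin : ∀ v, f (ustar + v) = ustar + T *ᵥ v := by
    intro v
    have h1 : (NSS A B C α β) *ᵥ (ustar + v) + b
        = (MSS A B C α β) *ᵥ ustar + (NSS A B C α β) *ᵥ v := by
      rw [Matrix.mulVec_add, ← hMN, Matrix.add_mulVec]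
      rw [hustar]
      abel
    rw [hfdef]
    simp only
    rw [h1, Matrix.mulVec_add, Matrix.mulVec_mulVec, hMinvM, Matrix.one_mulVec,
      Matrix.mulVec_mulVec, hT]
  have hiter : ∀ k : ℕ, f^[k] u0 = ustar + (T ^ k) *ᵥ (u0 - ustar) := by
    intro k
    induction k with
    | zero =>
      simp only [Function.iterate_zero, id_eq, pow_zero, Matrix.one_mulVec]
      abel
    | succ k ih =>
      rw [Function.iterate_succ_apply', ih, hlin, Matrix.mulVec_mulVec, ← pow_succ']
  rw [funext hiter]
  have : Tendsto (fun k : ℕ => ustar + (T ^ k) *ᵥ (u0 - ustar)) atTop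
      (nhds (ustar + 0)) := tendsto_const_nhds.add hconv2
  simpa using this
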